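/- arXiv:2204.09037 — 2 statements merged into one kernel-verified Lean document; each statement's English description precedes it below -/
import Mathlib

section
/- Let 𝔤 be a finite abelian group, Γ ≤ 𝔤 a subgroup with quotient G = 𝔤/Γ, and let I be the kernel of the induced ring map ℤ[𝔤] → ℤ[G]. Then I/I² is isomorphic as an abelian group to ℤ[G] ⊗_ℤ Γ. -/
open MonoidAlgebra TensorProduct

namespace RelAug
variable {𝔤 : Type*} [CommGroup 𝔤] (Γ : Subgroup 𝔤)

/-- section of the quotient map -/
noncomputable def sec (x : 𝔤 ⧸ Γ) : 𝔤 := x.out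

@[simp] lemma mk_sec (x : 𝔤 ⧸ Γ) : QuotientGroup.mk (sec Γ x) = x := Quotient.out_eq x

/-- the `Γ`-part of a group element relative to the section -/
noncomputable def gam (g : 𝔤) : Γ :=
  ⟨g * (sec Γ (↑g))⁻¹, by
    have : QuotientGroup.mk (sec Γ (↑g)) = (g : 𝔤 ⧸ Γ) := mk_sec Γ _
    have h := (QuotientGroup.eq (s := Γ)).mp this.symm
    simpa [mul_comm] using Γ.inv_mem h⟩

lemma sec_mul_gam (g : 𝔤) : sec Γ (↑g) * (gam Γ g : 𝔤) = g := by
  simp [gam, mul_comm]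

lemma gam_mul (g : 𝔤) (γ : Γ) : gam Γ (g * γ) = gam Γ g * γ := by
  have hq : ((g * γ : 𝔤) : 𝔤 ⧸ Γ) = (g : 𝔤 ⧸ Γ) := by
    simp [QuotientGroup.eq_one_iff, γ.2]
  ext
  simp [gam, hq, mul_comm, mul_assoc, mul_left_comm]

end RelAug

namespace RelAug
variable {𝔤 : Type*} [CommGroup 𝔤] (Γ : Subgroup 𝔤)

/-- the "derivative" map -/
noncomputable def D : MonoidAlgebra ℤ 𝔤 →ₗ[ℤ] (MonoidAlgebra ℤ (𝔤 ⧸ Γ) ⊗[ℤ] Additive Γ) :=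
  (Finsupp.lsum ℤ fun (g : 𝔤) => LinearMap.toSpanSingleton ℤ _
    (single (↑g : 𝔤 ⧸ Γ) (1:ℤ) ⊗ₜ Additive.ofMul (gam Γ g))).comp
    (coeffLinearEquiv ℤ).toLinearMap

lemma D_single (g : 𝔤) (z : ℤ) :
    D Γ (single g z) = z • (single (↑g : 𝔤 ⧸ Γ) (1:ℤ) ⊗ₜ Additive.ofMul (gam Γ g)) := by
  simp only [D]
  erw [LinearMap.comp_apply, Finsupp.lsum_single, LinearMap.toSpanSingleton_apply]

lemma D_single_mul (g : 𝔤) (γ : Γ) :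
    D Γ (single (g * γ) (1:ℤ)) =
      D Γ (single g 1) + single (↑g : 𝔤 ⧸ Γ) (1:ℤ) ⊗ₜ Additive.ofMul γ := by
  have hq : ((g * γ : 𝔤) : 𝔤 ⧸ Γ) = (g : 𝔤 ⧸ Γ) := by
    simp [QuotientGroup.eq_one_iff, γ.2]
  rw [D_single, D_single, one_smul, one_smul, hq, gam_mul]
  rw [show Additive.ofMul (gam Γ g * γ) = Additive.ofMul (gam Γ g) + Additive.ofMul γ from rfl,
    tmul_add]

/-- the generating set of the relative augmentation ideal -/
def genSet : Set (MonoidAlgebra ℤ 𝔤) :=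
  {x | ∃ (g : 𝔤) (γ : Γ), x = single (g * γ) 1 - single g 1}

lemma genSet_subset_ker :
    genSet Γ ⊆ (RingHom.ker (mapDomainRingHom ℤ (QuotientGroup.mk' Γ)) : Set _) := by
  rintro x ⟨g, γ, rfl⟩
  have hq : ((g * γ : 𝔤) : 𝔤 ⧸ Γ) = (g : 𝔤 ⧸ Γ) := by
    simp [QuotientGroup.eq_one_iff, γ.2]
  rw [SetLike.mem_coe, RingHom.mem_ker, map_sub]
  simp [Finsupp.mapDomain_single, hq]

end RelAug

namespace RelAug
variable {𝔤 : Type*} [CommGroup 𝔤] (Γ : Subgroup 𝔤)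

/-- a linear section of the quotient map on monoid algebras -/
noncomputable def jmap : MonoidAlgebra ℤ (𝔤 ⧸ Γ) →ₗ[ℤ] MonoidAlgebra ℤ 𝔤 :=
  (Finsupp.lsum ℤ fun x => LinearMap.toSpanSingleton ℤ _ (single (sec Γ x) (1:ℤ))).comp
    (coeffLinearEquiv ℤ).toLinearMap

lemma jmap_single (x : 𝔤 ⧸ Γ) (z : ℤ) :
    jmap Γ (single x z) = z • single (sec Γ x) 1 := by
  simp only [jmap]
  erw [LinearMap.comp_apply, Finsupp.lsum_single, LinearMap.toSpanSingleton_apply]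

lemma sub_jmap_mem_span (f : MonoidAlgebra ℤ 𝔤) :
    f - jmap Γ (mapDomainRingHom ℤ (QuotientGroup.mk' Γ) f) ∈
      Submodule.span ℤ (genSet Γ) := by
  induction f using MonoidAlgebra.induction_linear with
  | zero => simpa using Submodule.zero_mem _
  | add f g hf hg =>
      rw [map_add, map_add]
      have := Submodule.add_mem _ hf hg
      rwa [sub_add_sub_comm] at this
  | single a b =>
      show (single a b : MonoidAlgebra ℤ 𝔤) -
        jmap Γ ((mapDomainRingHom ℤ (QuotientGroup.mk' Γ)) (single a b)) ∈
          Submodule.span ℤ (genSet Γ)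
      have h1 : (mapDomainRingHom ℤ (QuotientGroup.mk' Γ)) (single a b)
          = single (↑a : 𝔤 ⧸ Γ) b := by
        simp [Finsupp.mapDomain_single]
      rw [h1, show (single (↑a : 𝔤 ⧸ Γ) b : MonoidAlgebra ℤ (𝔤 ⧸ Γ))
          = b • single (↑a : 𝔤 ⧸ Γ) 1 by simp [MonoidAlgebra.smul_single], map_smul,
        jmap_single, one_smul]
      have hb : (single a b : MonoidAlgebra ℤ 𝔤) = b • single a 1 := by
        simp [MonoidAlgebra.smul_single]
      rw [hb, ← smul_sub]
      refine Submodule.smul_mem _ _ (Submodule.subset_span ?_)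
      refine ⟨sec Γ (↑a), gam Γ a, ?_⟩
      rw [sec_mul_gam]

lemma ker_le_span :
    (RingHom.ker (mapDomainRingHom ℤ (QuotientGroup.mk' Γ)) : Set (MonoidAlgebra ℤ 𝔤)) ⊆
      Submodule.span ℤ (genSet Γ) := by
  intro f hf
  have h0 : (mapDomainRingHom ℤ (QuotientGroup.mk' Γ)) f = 0 := hf
  have := sub_jmap_mem_span Γ f
  rwa [h0, map_zero, sub_zero] at this

end RelAug

namespace RelAug
variable {𝔤 : Type*} [CommGroup 𝔤] (Γ : Subgroup 𝔤)

lemma D_gen_mul_gen (g : 𝔤) (γ : Γ) (h : 𝔤) (δ : Γ) :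
    D Γ ((single (g * γ) (1:ℤ) - single g 1) * (single (h * δ) (1:ℤ) - single h 1)) = 0 := by
  have i1 : g * ↑γ * (h * ↑δ) = (g * h) * ((γ * δ : Γ) : 𝔤) := by
    rw [Subgroup.coe_mul, mul_mul_mul_comm]
  have i2 : g * ↑γ * h = (g * h) * (γ : 𝔤) := mul_right_comm g _ h
  have i3 : g * (h * ↑δ) = (g * h) * (δ : 𝔤) := (mul_assoc g h _).symm
  have e1 : (single (g * γ) (1:ℤ) - single g 1) * (single (h * δ) (1:ℤ) - single h 1)
      = single ((g * h) * ((γ * δ : Γ) : 𝔤)) (1:ℤ) - single ((g * h) * (γ : 𝔤)) (1:ℤ)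
        - single ((g * h) * (δ : 𝔤)) (1:ℤ) + single (g * h) (1:ℤ) := by
    rw [sub_mul, mul_sub, mul_sub, MonoidAlgebra.single_mul_single,
      MonoidAlgebra.single_mul_single, MonoidAlgebra.single_mul_single,
      MonoidAlgebra.single_mul_single, one_mul, i1, i2, i3]
    abel
  rw [e1, map_add, map_sub, map_sub, D_single_mul Γ (g * h) (γ * δ),
    D_single_mul Γ (g * h) γ, D_single_mul Γ (g * h) δ,
    show Additive.ofMul (γ * δ) = Additive.ofMul γ + Additive.ofMul δ from rfl, tmul_add]
  abel

lemma D_mul_eq_zero {a b : MonoidAlgebra ℤ 𝔤}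
    (ha : a ∈ Submodule.span ℤ (genSet Γ)) (hb : b ∈ Submodule.span ℤ (genSet Γ)) :
    D Γ (a * b) = 0 := by
  induction hb using Submodule.span_induction with
  | mem x hx =>
      obtain ⟨h, δ, rfl⟩ := hx
      induction ha using Submodule.span_induction with
      | mem y hy =>
          obtain ⟨g, γ, rfl⟩ := hy
          exact D_gen_mul_gen Γ g γ h δ
      | zero => rw [zero_mul, map_zero]
      | add y z _ _ hy hz => rw [add_mul, map_add, hy, hz, add_zero]
      | smul z y _ hy => rw [smul_mul_assoc, map_smul, hy, smul_zero]
  | zero => rw [mul_zero, map_zero]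
  | add y z _ _ hy hz => rw [mul_add, map_add, hy, hz, add_zero]
  | smul z y _ hy => rw [mul_smul_comm, map_smul, hy, smul_zero]

end RelAug

namespace RelAug
variable {𝔤 : Type*} [CommGroup 𝔤] (Γ : Subgroup 𝔤)

/-- The relative augmentation ideal. -/
noncomputable abbrev Ik : Ideal (MonoidAlgebra ℤ 𝔤) :=
  RingHom.ker (mapDomainRingHom ℤ (QuotientGroup.mk' Γ))

lemma gen_mem_Ik (g : 𝔤) (γ : Γ) :
    (single (g * γ) (1:ℤ) - single g 1) ∈ Ik Γ :=
  genSet_subset_ker Γ ⟨g, γ, rfl⟩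

lemma gen_mem_Ik' (γ : Γ) : (single (γ : 𝔤) (1:ℤ) - 1) ∈ Ik Γ := by
  have := gen_mem_Ik Γ 1 γ
  rwa [one_mul, ← MonoidAlgebra.one_def] at this

lemma sub_single_mem_Ik (g h : 𝔤) (hq : (g : 𝔤 ⧸ Γ) = (h : 𝔤 ⧸ Γ)) :
    (single g (1:ℤ) - single h 1) ∈ Ik Γ := by
  rw [RingHom.mem_ker, map_sub]
  simp [Finsupp.mapDomain_single, hq]

lemma factor_eq (u g : 𝔤) (γ : Γ) :
    (single (u * γ) (1:ℤ) - single u 1) - (single (g * γ) (1:ℤ) - single g 1)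
      = (single u (1:ℤ) - single g 1) * (single (γ : 𝔤) (1:ℤ) - 1) := by
  rw [sub_mul, mul_sub, mul_sub, mul_one, mul_one,
    MonoidAlgebra.single_mul_single, MonoidAlgebra.single_mul_single, one_mul]

/-- the building block of the inverse map -/
noncomputable def mu (x : 𝔤 ⧸ Γ) : Additive Γ →+ (Ik Γ).Cotangent :=
  AddMonoidHom.mk' (fun γ => (Ik Γ).toCotangent
    ⟨single (sec Γ x * (γ.toMul : 𝔤)) 1 - single (sec Γ x) 1, gen_mem_Ik Γ _ _⟩) (by
    intro γ δ
    rw [← map_add, Ideal.toCotangent_eq]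
    show (single (sec Γ x * ((γ + δ).toMul : 𝔤)) (1:ℤ) - single (sec Γ x) 1)
      - ((single (sec Γ x * (γ.toMul : 𝔤)) (1:ℤ) - single (sec Γ x) 1)
        + (single (sec Γ x * (δ.toMul : 𝔤)) (1:ℤ) - single (sec Γ x) 1)) ∈ (Ik Γ) ^ 2
    have key : (single (sec Γ x * ((γ + δ).toMul : 𝔤)) (1:ℤ) - single (sec Γ x) 1)
        - ((single (sec Γ x * (γ.toMul : 𝔤)) (1:ℤ) - single (sec Γ x) 1)
          + (single (sec Γ x * (δ.toMul : 𝔤)) (1:ℤ) - single (sec Γ x) 1))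
        = (single (sec Γ x * (γ.toMul : 𝔤)) (1:ℤ) - single (sec Γ x) 1)
          * (single ((δ.toMul : Γ) : 𝔤) (1:ℤ) - 1) := by
      rw [show ((γ + δ).toMul : 𝔤) = (γ.toMul : 𝔤) * (δ.toMul : 𝔤) from rfl, ← mul_assoc]
      linear_combination factor_eq Γ (sec Γ x * (γ.toMul : 𝔤)) (sec Γ x) δ.toMul
    rw [key, pow_two]
    exact Ideal.mul_mem_mul (gen_mem_Ik Γ _ _) (gen_mem_Ik' Γ _))

lemma mu_apply (x : 𝔤 ⧸ Γ) (γ : Γ) :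
    mu Γ x (Additive.ofMul γ) = (Ik Γ).toCotangent
      ⟨single (sec Γ x * (γ : 𝔤)) 1 - single (sec Γ x) 1, gen_mem_Ik Γ (sec Γ x) γ⟩ := rfl

end RelAug

namespace RelAug
variable {𝔤 : Type*} [CommGroup 𝔤] (Γ : Subgroup 𝔤)

/-- the bilinear map underlying the inverse map -/
noncomputable def psiBil :
    MonoidAlgebra ℤ (𝔤 ⧸ Γ) →ₗ[ℤ] (Additive Γ →ₗ[ℤ] (Ik Γ).Cotangent) :=
  (Finsupp.lsum ℤ fun x => LinearMap.toSpanSingleton ℤ _ ((mu Γ x).toIntLinearMap)).comp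
    (coeffLinearEquiv ℤ).toLinearMap

/-- the inverse map -/
noncomputable def psi :
    MonoidAlgebra ℤ (𝔤 ⧸ Γ) ⊗[ℤ] Additive Γ →ₗ[ℤ] (Ik Γ).Cotangent :=
  TensorProduct.lift (psiBil Γ)

lemma psi_tmul (x : 𝔤 ⧸ Γ) (γ : Γ) :
    psi Γ (single x (1:ℤ) ⊗ₜ Additive.ofMul γ) = mu Γ x (Additive.ofMul γ) := by
  simp only [psi, TensorProduct.lift.tmul, psiBil]
  erw [TensorProduct.lift.tmul]
  erw [LinearMap.comp_apply, Finsupp.lsum_single, LinearMap.toSpanSingleton_apply]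
  rw [one_smul]
  rfl

/-- the forward map on the ideal -/
noncomputable def phi0 :
    (Ik Γ) →ₗ[ℤ] (MonoidAlgebra ℤ (𝔤 ⧸ Γ) ⊗[ℤ] Additive Γ) :=
  (D Γ).comp (((Ik Γ).subtype).restrictScalars ℤ)

lemma phi0_apply (m : Ik Γ) : phi0 Γ m = D Γ ↑m := rfl

lemma phi0_vanish :
    Submodule.restrictScalars ℤ
        ((Ik Γ) • (⊤ : Submodule (MonoidAlgebra ℤ 𝔤) (Ik Γ))) ≤
      LinearMap.ker (phi0 Γ) := by
  intro y hy
  rw [LinearMap.mem_ker]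
  have hy' : y ∈ (Ik Γ) • (⊤ : Submodule (MonoidAlgebra ℤ 𝔤) (Ik Γ)) := hy
  refine Submodule.smul_induction_on hy' ?_ ?_
  · intro r hr n _
    rw [phi0_apply]
    have hc : ((r • n : Ik Γ) : MonoidAlgebra ℤ 𝔤) = r * ↑n := rfl
    rw [hc]
    exact D_mul_eq_zero Γ (ker_le_span Γ hr) (ker_le_span Γ n.2)
  · intro a b ha hb
    rw [map_add, ha, hb, add_zero]

/-- the forward map -/
noncomputable def phi :
    (Ik Γ).Cotangent →ₗ[ℤ] (MonoidAlgebra ℤ (𝔤 ⧸ Γ) ⊗[ℤ] Additive Γ) :=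
  (Submodule.liftQ _ (phi0 Γ) (phi0_vanish Γ)).comp
    ((Submodule.Quotient.restrictScalarsEquiv ℤ
      ((Ik Γ) • (⊤ : Submodule (MonoidAlgebra ℤ 𝔤) (Ik Γ)))).symm.toLinearMap)

lemma phi_toCotangent (m : Ik Γ) : phi Γ ((Ik Γ).toCotangent m) = D Γ ↑m := by
  simp only [phi, LinearMap.comp_apply, LinearEquiv.coe_toLinearMap]
  rfl

end RelAug

namespace RelAug
variable {𝔤 : Type*} [CommGroup 𝔤] (Γ : Subgroup 𝔤)

lemma D_gen (g : 𝔤) (γ : Γ) :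
    D Γ (single (g * γ) (1:ℤ) - single g 1)
      = single (↑g : 𝔤 ⧸ Γ) (1:ℤ) ⊗ₜ Additive.ofMul γ := by
  rw [map_sub, D_single_mul, add_sub_cancel_left]

lemma span_le_Ik : Submodule.span ℤ (genSet Γ) ≤ (Ik Γ).restrictScalars ℤ := by
  rw [Submodule.span_le]
  exact genSet_subset_ker Γ

lemma psi_D : ∀ m (hm : m ∈ Ik Γ),
    psi Γ (D Γ m) = (Ik Γ).toCotangent ⟨m, hm⟩ := by
  have main : ∀ m, m ∈ Submodule.span ℤ (genSet Γ) →
      ∀ hm : m ∈ Ik Γ, psi Γ (D Γ m) = (Ik Γ).toCotangent ⟨m, hm⟩ := by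
    intro m hs
    induction hs using Submodule.span_induction with
    | mem x hx =>
        intro hm
        obtain ⟨g, γ, rfl⟩ := hx
        rw [D_gen, psi_tmul, mu_apply, Ideal.toCotangent_eq]
        show (single (sec Γ ↑g * (γ : 𝔤)) (1:ℤ) - single (sec Γ ↑g) 1)
          - (single (g * γ) (1:ℤ) - single g 1) ∈ (Ik Γ) ^ 2
        rw [factor_eq Γ (sec Γ (↑g)) g γ, pow_two]
        exact Ideal.mul_mem_mul (sub_single_mem_Ik Γ _ _ (by rw [mk_sec]))
          (gen_mem_Ik' Γ γ)
    | zero =>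
        intro hm
        rw [map_zero, map_zero, show (⟨0, hm⟩ : Ik Γ) = 0 from rfl, map_zero]
    | add a b hsa hsb iha ihb =>
        intro hm
        have haI : a ∈ Ik Γ := span_le_Ik Γ hsa
        have hbI : b ∈ Ik Γ := span_le_Ik Γ hsb
        rw [map_add, map_add, iha haI, ihb hbI, ← map_add]
        rfl
    | smul z a hsa iha =>
        intro hm
        have haI : a ∈ Ik Γ := span_le_Ik Γ hsa
        rw [map_smul, map_smul, iha haI,
          show (z • ((Ik Γ).toCotangent ⟨a, haI⟩) : (Ik Γ).Cotangent)
            = (Ik Γ).toCotangent (z • ⟨a, haI⟩) from (map_zsmul _ z _).symm]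
        rfl
  exact fun m hm => main m (ker_le_span Γ hm) hm

lemma phi_psi_tmul (x : 𝔤 ⧸ Γ) (γ : Γ) :
    phi Γ (psi Γ (single x (1:ℤ) ⊗ₜ Additive.ofMul γ))
      = single x (1:ℤ) ⊗ₜ Additive.ofMul γ := by
  rw [psi_tmul, mu_apply, phi_toCotangent]
  show D Γ (single (sec Γ x * (γ : 𝔤)) (1:ℤ) - single (sec Γ x) 1) = _
  rw [D_gen, mk_sec]

end RelAug

/-- Let `𝔤` be a finite abelian group, `Γ ≤ 𝔤` a subgroup with quotient `G = 𝔤/Γ`, and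
let `I` be the kernel of the induced ring map `ℤ[𝔤] → ℤ[G]` (the relative augmentation
ideal).  Then `I/I²` is isomorphic as an abelian group to `ℤ[G] ⊗_ℤ Γ`. -/
theorem relative_augmentation_cotangent (𝔤 : Type*) [CommGroup 𝔤] [Fintype 𝔤]
    (Γ : Subgroup 𝔤) :
    Nonempty
      ((RingHom.ker
          (MonoidAlgebra.mapDomainRingHom ℤ (QuotientGroup.mk' Γ))).Cotangent ≃+
        (MonoidAlgebra ℤ (𝔤 ⧸ Γ) ⊗[ℤ] Additive Γ)) := by
  refine ⟨{ toFun := RelAug.phi Γ, invFun := RelAug.psi Γ,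
            left_inv := ?_, right_inv := ?_, map_add' := map_add _ }⟩
  · intro c
    obtain ⟨m, rfl⟩ := Ideal.toCotangent_surjective _ c
    rw [RelAug.phi_toCotangent, RelAug.psi_D Γ m m.2]
  · intro t
    induction t using TensorProduct.induction_on with
    | zero => rw [map_zero, map_zero]
    | add a b ha hb => rw [map_add, map_add, ha, hb]
    | tmul s γ =>
        induction s using MonoidAlgebra.induction_linear with
        | zero =>
            rw [show (0 : MonoidAlgebra ℤ (𝔤 ⧸ Γ)) ⊗ₜ[ℤ] γ = 0 from zero_tmul _ γ,
              map_zero, map_zero]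
        | add f g hf hg =>
            rw [show (f + g : MonoidAlgebra ℤ (𝔤 ⧸ Γ)) ⊗ₜ[ℤ] γ
                = f ⊗ₜ[ℤ] γ + g ⊗ₜ[ℤ] γ from add_tmul f g γ, map_add, map_add, hf, hg]
        | single a b =>
            have h1 : (single a b : MonoidAlgebra ℤ (𝔤 ⧸ Γ)) ⊗ₜ[ℤ] γ
                = b • ((single a (1:ℤ) : MonoidAlgebra ℤ (𝔤 ⧸ Γ)) ⊗ₜ[ℤ] γ) := by
              rw [smul_tmul', MonoidAlgebra.smul_single, smul_eq_mul, mul_one]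
            rw [h1, map_smul, map_smul]
            exact congrArg (b • ·) (RelAug.phi_psi_tmul Γ a γ.toMul)
end

section
/- Let v₁, …, v_n ∈ (ℝ^{>0})^n be linearly independent. The Colmez closure C*(v₁,…,v_n) = ⊔_{J positive} C({v_j : j ∈ J}) is a disjoint union: distinct positive subsets J ≠ J' give disjoint cones C({v_j : j∈J}) ∩ C({v_j : j∈J'}) = ∅. -/
open Finset

/-- The open simplicial cone on the vectors `{v j : j ∈ J}`: strictly positive linear
combinations of the `v j`, `j ∈ J`. -/
def coneOn {n : ℕ} (v : Fin n → (Fin n → ℝ)) (J : Finset (Fin n)) :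
    Set (Fin n → ℝ) :=
  {x | ∃ t : Fin n → ℝ, (∀ i ∈ J, 0 < t i) ∧ (∀ i ∉ J, t i = 0) ∧ x = ∑ i, t i • v i}

/-- Let `v₁, …, v_n ∈ (ℝ^{>0})ⁿ` be linearly independent, and write
`(0,…,0,1) = ∑ qᵢ vᵢ`.  Call a nonempty `J ⊆ {1,…,n}` positive if `qᵢ > 0` for all
`i ∉ J`.  The Colmez closure `C*(v₁,…,v_n) = ⊔_{J positive} C({v_j : j ∈ J})` is a
disjoint union: distinct positive subsets `J ≠ J'` give disjoint cones. -/
theorem colmez_closure_disjoint {n : ℕ} (hn : 0 < n)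
    (v : Fin n → (Fin n → ℝ))
    (hpos : ∀ i j, 0 < v i j)
    (hli : LinearIndependent ℝ v)
    (q : Fin n → ℝ)
    (hq : (Pi.single (⟨n - 1, by omega⟩ : Fin n) (1 : ℝ)) = ∑ i, q i • v i)
    (J J' : Finset (Fin n))
    (hJ : J.Nonempty ∧ ∀ i ∉ J, 0 < q i)
    (hJ' : J'.Nonempty ∧ ∀ i ∉ J', 0 < q i)
    (hne : J ≠ J') :
    coneOn v J ∩ coneOn v J' = ∅ := by
  ext x
  simp only [Set.mem_inter_iff, Set.mem_empty_iff_false, iff_false]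
  rintro ⟨⟨t, htJ, htn, rfl⟩, ⟨s, hsJ, hsn, hx⟩⟩
  have hts : t = s := by
    have h0 : ∑ i, (t i - s i) • v i = 0 := by
      simp only [sub_smul]
      rw [Finset.sum_sub_distrib, hx, sub_self]
    have h := Fintype.linearIndependent_iff.mp hli (fun i => t i - s i) h0
    funext i
    have hi : t i - s i = 0 := h i
    linarith
  apply hne
  ext i
  constructor
  · intro hi
    by_contra h'
    have := htJ i hi
    have h2 := hsn i h'
    have := congrFun hts i
    linarith
  · intro hi
    by_contra h'
    have := hsJ i hi
    have h2 := htn i h'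
    have := congrFun hts i
    linarith
end
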